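/- Every equivalence class of Turyn-type sequences TT(n) contains at least one member which is in canonical form. -/

import Mathlib

/-- A sequence is modeled as a function `ℤ → ℤ`. -/
abbrev BSeq : Type := ℤ → ℤ

/-- A quadruple of sequences. -/
abbrev SeqQuad : Type := BSeq × BSeq × BSeq × BSeq

/-- A binary (`±1`) sequence of length `n`: supported on `[1, n]`,
with values in `{1, -1}` there, and `0` outside. -/
def IsBinarySeq (n : ℕ) (a : BSeq) : Prop :=
  (∀ i : ℤ, 1 ≤ i → i ≤ (n : ℤ) → a i = 1 ∨ a i = -1) ∧
  (∀ i : ℤ, i < 1 ∨ (n : ℤ) < i → a i = 0)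

/-- The nonperiodic autocorrelation function `N_A(i) = Σ_{j ∈ ℤ} a_j a_{i+j}`. -/
noncomputable def NAC (a : BSeq) (i : ℤ) : ℤ := ∑ᶠ j : ℤ, a j * a (i + j)

/-- `(A; B; C; D)` is a Turyn-type sequence `TT(n)`: binary sequences of lengths
`n, n, n, n-1` with `N_A(i) + N_B(i) + 2N_C(i) + 2N_D(i) = 0` for all `i ≠ 0`. -/
def IsTT (n : ℕ) (A B C D : BSeq) : Prop :=
  IsBinarySeq n A ∧ IsBinarySeq n B ∧ IsBinarySeq n C ∧ IsBinarySeq (n - 1) D ∧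
  ∀ i : ℤ, i ≠ 0 → NAC A i + NAC B i + 2 * NAC C i + 2 * NAC D i = 0

/-- The negated sequence `-A`. -/
def negSeq (a : BSeq) : BSeq := fun i => -a i

/-- The reversed sequence `A'` of a sequence of length `n`. -/
def revSeq (n : ℕ) (a : BSeq) : BSeq := fun i => a ((n : ℤ) + 1 - i)

/-- The alternated sequence `A*`, whose `i`-th entry is `(-1)^(i-1) a_i`. -/
def altSeq (a : BSeq) : BSeq := fun i => if Even i then -a i else a i

/-- The elementary transformations of a quadruple `(A; B; C; D)` (with `A, B, C`
of length `n` and `D` of length `n-1`). -/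
inductive ElemStep (n : ℕ) : SeqQuad → SeqQuad → Prop
  | negA (A B C D : BSeq) : ElemStep n (A, B, C, D) (negSeq A, B, C, D)
  | negB (A B C D : BSeq) : ElemStep n (A, B, C, D) (A, negSeq B, C, D)
  | negC (A B C D : BSeq) : ElemStep n (A, B, C, D) (A, B, negSeq C, D)
  | negD (A B C D : BSeq) : ElemStep n (A, B, C, D) (A, B, C, negSeq D)
  | revA (A B C D : BSeq) : ElemStep n (A, B, C, D) (revSeq n A, B, C, D)
  | revB (A B C D : BSeq) : ElemStep n (A, B, C, D) (A, revSeq n B, C, D)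
  | revC (A B C D : BSeq) : ElemStep n (A, B, C, D) (A, B, revSeq n C, D)
  | revD (A B C D : BSeq) : ElemStep n (A, B, C, D) (A, B, C, revSeq (n - 1) D)
  | alt (A B C D : BSeq) : ElemStep n (A, B, C, D) (altSeq A, altSeq B, altSeq C, altSeq D)
  | swap (A B C D : BSeq) : ElemStep n (A, B, C, D) (B, A, C, D)

/-- Two quadruples are equivalent if one can be transformed into the other by a
finite sequence of elementary transformations. -/
def TTEquiv (n : ℕ) : SeqQuad → SeqQuad → Prop := Relation.ReflTransGen (ElemStep n)

/-- The canonical form of a Turyn-type sequence `TT(n)`. -/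
def IsCanonical (n : ℕ) (A B C D : BSeq) : Prop :=
  -- (i)
  (A 1 = 1 ∧ A (n : ℤ) = 1 ∧ B 1 = 1 ∧ B (n : ℤ) = 1 ∧ C 1 = 1 ∧
    (2 ≤ n → D 1 = 1)) ∧
  -- (ii)
  (∀ i : ℤ, 1 ≤ i → i ≤ (n : ℤ) → A i ≠ A ((n : ℤ) + 1 - i) →
    (∀ j : ℤ, 1 ≤ j → j < i → A j = A ((n : ℤ) + 1 - j)) → A i = 1) ∧
  -- (iii)
  (∀ i : ℤ, 1 ≤ i → i ≤ (n : ℤ) → B i ≠ B ((n : ℤ) + 1 - i) →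
    (∀ j : ℤ, 1 ≤ j → j < i → B j = B ((n : ℤ) + 1 - j)) → B i = 1) ∧
  -- (iv)
  (∀ i : ℤ, 1 ≤ i → i ≤ (n : ℤ) → C i = C ((n : ℤ) + 1 - i) →
    (∀ j : ℤ, 1 ≤ j → j < i → C j ≠ C ((n : ℤ) + 1 - j)) → C i = 1) ∧
  -- (v)
  (∀ i : ℤ, 1 ≤ i → i ≤ (n : ℤ) - 1 → D i * D ((n : ℤ) - i) ≠ D ((n : ℤ) - 1) →
    (∀ j : ℤ, 1 ≤ j → j < i → D j * D ((n : ℤ) - j) = D ((n : ℤ) - 1)) → D i = 1) ∧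
  -- (vi)
  (2 < n → A 2 ≠ B 2 → A 2 = 1) ∧
  (2 < n → A 2 = B 2 → A ((n : ℤ) - 1) = 1 ∧ B ((n : ℤ) - 1) = -1)

/-! ### Auxiliary lemmas -/

lemma pm_mul {x y : ℤ} (hx : x = 1 ∨ x = -1) (hy : y = 1 ∨ y = -1) :
    x * y = 1 ∨ x * y = -1 := by
  rcases hx with h | h <;> rcases hy with h' | h' <;> rw [h, h'] <;> norm_num

lemma NAC_eq_sum {n : ℕ} {a : BSeq} (ha : IsBinarySeq n a) (i : ℤ) :
    NAC a i = ∑ j ∈ Finset.Icc (1:ℤ) ((n:ℤ) - i), a j * a (i + j) := by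
  apply finsum_eq_sum_of_support_subset
  intro j hj
  simp only [Function.mem_support] at hj
  simp only [Finset.coe_Icc, Set.mem_Icc]
  constructor
  · by_contra hlt
    exact hj (by rw [ha.2 j (Or.inl (by omega))]; ring)
  · by_contra hlt
    exact hj (by rw [ha.2 (i+j) (Or.inr (by omega))]; ring)

lemma NAC_zero_of_ge {n : ℕ} {a : BSeq} (ha : IsBinarySeq n a) {i : ℤ}
    (hi : (n:ℤ) ≤ i) : NAC a i = 0 := by
  rw [NAC_eq_sum ha i, Finset.Icc_eq_empty (by omega), Finset.sum_empty]

lemma NAC_last {n : ℕ} {a : BSeq} (ha : IsBinarySeq n a) (hn : 2 ≤ n) :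
    NAC a ((n:ℤ) - 1) = a 1 * a (n:ℤ) := by
  rw [NAC_eq_sum ha]
  have h1 : (n:ℤ) - ((n:ℤ) - 1) = 1 := by ring
  rw [h1, Finset.Icc_self, Finset.sum_singleton]
  congr 1
  ring

lemma NAC_sublast {n : ℕ} {a : BSeq} (ha : IsBinarySeq n a) (hn : 3 ≤ n) :
    NAC a ((n:ℤ) - 2) = a 1 * a ((n:ℤ) - 1) + a 2 * a (n:ℤ) := by
  rw [NAC_eq_sum ha]
  have h1 : (n:ℤ) - ((n:ℤ) - 2) = 2 := by ring
  have h2 : Finset.Icc (1:ℤ) 2 = {1, 2} := by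
    ext x; simp only [Finset.mem_Icc, Finset.mem_insert, Finset.mem_singleton]; omega
  rw [h1, h2, Finset.sum_insert (by simp), Finset.sum_singleton]
  congr 2 <;> ring

lemma NAC_negSeq (a : BSeq) (i : ℤ) : NAC (negSeq a) i = NAC a i :=
  finsum_congr fun j => by simp [negSeq]

lemma NAC_revSeq (m : ℕ) (a : BSeq) (i : ℤ) : NAC (revSeq m a) i = NAC a i := by
  unfold NAC
  rw [← finsum_comp_equiv (Equiv.subLeft ((m:ℤ) + 1 - i))
    (f := fun j => revSeq m a j * revSeq m a (i + j))]
  apply finsum_congr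
  intro j
  simp only [Equiv.subLeft_apply, revSeq]
  rw [mul_comm]
  congr 2 <;> ring

lemma NAC_altSeq (a : BSeq) (i : ℤ) :
    NAC (altSeq a) i = if Even i then NAC a i else -NAC a i := by
  by_cases hi : Even i
  · simp only [hi, if_true]
    apply finsum_congr
    intro j
    have hiff : Even (i + j) ↔ Even j := by
      constructor
      · intro h; have := h.sub hi; simpa using this
      · intro h; exact hi.add h
    by_cases hj : Even j
    · simp [altSeq, hj, hiff]
    · simp [altSeq, hj, hiff]
  · simp only [hi, if_false]
    unfold NAC
    rw [← finsum_neg_distrib]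
    apply finsum_congr
    intro j
    have hiff : Even (i + j) ↔ ¬ Even j := by
      constructor
      · intro h hj; exact hi (by simpa using h.sub hj)
      · intro hj
        rcases Int.even_or_odd j with h | h
        · exact absurd h hj
        · rcases (Int.not_even_iff_odd.mp hi).add_odd h with h2
          exact h2
    by_cases hj : Even j
    · simp [altSeq, hj, hiff]
    · simp [altSeq, hj, hiff]

lemma binNeg {n : ℕ} {a : BSeq} (ha : IsBinarySeq n a) : IsBinarySeq n (negSeq a) := by
  constructor
  · intro i h1 h2; rcases ha.1 i h1 h2 with h | h <;> simp [negSeq, h]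
  · intro i h; simp [negSeq, ha.2 i h]

lemma binRev {n : ℕ} {a : BSeq} (ha : IsBinarySeq n a) : IsBinarySeq n (revSeq n a) := by
  constructor
  · intro i h1 h2
    exact ha.1 _ (by omega) (by omega)
  · intro i h
    exact ha.2 _ (by omega)

lemma binAlt {n : ℕ} {a : BSeq} (ha : IsBinarySeq n a) : IsBinarySeq n (altSeq a) := by
  constructor
  · intro i h1 h2
    rcases ha.1 i h1 h2 with h | h <;> by_cases he : Even i <;> simp [altSeq, he, h]
  · intro i h
    by_cases he : Even i <;> simp [altSeq, he, ha.2 i h]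

lemma isTT_step {n : ℕ} {q p : SeqQuad} (hs : ElemStep n q p)
    (h : IsTT n q.1 q.2.1 q.2.2.1 q.2.2.2) : IsTT n p.1 p.2.1 p.2.2.1 p.2.2.2 := by
  cases hs with
  | negA A B C D =>
    obtain ⟨hA, hB, hC, hD, heq⟩ := h
    exact ⟨binNeg hA, hB, hC, hD, fun i hi => by rw [NAC_negSeq]; exact heq i hi⟩
  | negB A B C D =>
    obtain ⟨hA, hB, hC, hD, heq⟩ := h
    exact ⟨hA, binNeg hB, hC, hD, fun i hi => by rw [NAC_negSeq]; exact heq i hi⟩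
  | negC A B C D =>
    obtain ⟨hA, hB, hC, hD, heq⟩ := h
    exact ⟨hA, hB, binNeg hC, hD, fun i hi => by rw [NAC_negSeq]; exact heq i hi⟩
  | negD A B C D =>
    obtain ⟨hA, hB, hC, hD, heq⟩ := h
    exact ⟨hA, hB, hC, binNeg hD, fun i hi => by rw [NAC_negSeq]; exact heq i hi⟩
  | revA A B C D =>
    obtain ⟨hA, hB, hC, hD, heq⟩ := h
    exact ⟨binRev hA, hB, hC, hD, fun i hi => by rw [NAC_revSeq]; exact heq i hi⟩
  | revB A B C D =>
    obtain ⟨hA, hB, hC, hD, heq⟩ := h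
    exact ⟨hA, binRev hB, hC, hD, fun i hi => by rw [NAC_revSeq]; exact heq i hi⟩
  | revC A B C D =>
    obtain ⟨hA, hB, hC, hD, heq⟩ := h
    exact ⟨hA, hB, binRev hC, hD, fun i hi => by rw [NAC_revSeq]; exact heq i hi⟩
  | revD A B C D =>
    obtain ⟨hA, hB, hC, hD, heq⟩ := h
    exact ⟨hA, hB, hC, binRev hD, fun i hi => by rw [NAC_revSeq]; exact heq i hi⟩
  | alt A B C D =>
    obtain ⟨hA, hB, hC, hD, heq⟩ := h
    refine ⟨binAlt hA, binAlt hB, binAlt hC, binAlt hD, ?_⟩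
    intro i hi
    rw [NAC_altSeq, NAC_altSeq, NAC_altSeq, NAC_altSeq]
    by_cases he : Even i
    · simp only [he, if_true]
      exact heq i hi
    · simp only [he, if_false]
      have := heq i hi
      linarith
  | swap A B C D =>
    obtain ⟨hA, hB, hC, hD, heq⟩ := h
    exact ⟨hB, hA, hC, hD, fun i hi => by have := heq i hi; linarith⟩

lemma isTT_equiv {n : ℕ} {q p : SeqQuad} (h : TTEquiv n q p)
    (hq : IsTT n q.1 q.2.1 q.2.2.1 q.2.2.2) : IsTT n p.1 p.2.1 p.2.2.1 p.2.2.2 := by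
  induction h with
  | refl => exact hq
  | tail _ hstep ih => exact isTT_step hstep ih

lemma equivA {n : ℕ} {X Y B C D : BSeq}
    (h : Y = X ∨ Y = negSeq X ∨ Y = revSeq n X ∨ Y = negSeq (revSeq n X)) :
    TTEquiv n (X, B, C, D) (Y, B, C, D) := by
  rcases h with rfl | rfl | rfl | rfl
  · exact Relation.ReflTransGen.refl
  · exact Relation.ReflTransGen.single (ElemStep.negA X B C D)
  · exact Relation.ReflTransGen.single (ElemStep.revA X B C D)
  · exact Relation.ReflTransGen.head (ElemStep.revA X B C D)
      (Relation.ReflTransGen.single (ElemStep.negA (revSeq n X) B C D))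

lemma equivB {n : ℕ} {A X Y C D : BSeq}
    (h : Y = X ∨ Y = negSeq X ∨ Y = revSeq n X ∨ Y = negSeq (revSeq n X)) :
    TTEquiv n (A, X, C, D) (A, Y, C, D) := by
  rcases h with rfl | rfl | rfl | rfl
  · exact Relation.ReflTransGen.refl
  · exact Relation.ReflTransGen.single (ElemStep.negB A X C D)
  · exact Relation.ReflTransGen.single (ElemStep.revB A X C D)
  · exact Relation.ReflTransGen.head (ElemStep.revB A X C D)
      (Relation.ReflTransGen.single (ElemStep.negB A (revSeq n X) C D))

lemma equivC {n : ℕ} {A B X Y D : BSeq}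
    (h : Y = X ∨ Y = negSeq X ∨ Y = revSeq n X ∨ Y = negSeq (revSeq n X)) :
    TTEquiv n (A, B, X, D) (A, B, Y, D) := by
  rcases h with rfl | rfl | rfl | rfl
  · exact Relation.ReflTransGen.refl
  · exact Relation.ReflTransGen.single (ElemStep.negC A B X D)
  · exact Relation.ReflTransGen.single (ElemStep.revC A B X D)
  · exact Relation.ReflTransGen.head (ElemStep.revC A B X D)
      (Relation.ReflTransGen.single (ElemStep.negC A B (revSeq n X) D))

lemma equivD {n : ℕ} {A B C X Y : BSeq}
    (h : Y = X ∨ Y = negSeq X ∨ Y = revSeq (n-1) X ∨ Y = negSeq (revSeq (n-1) X)) :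
    TTEquiv n (A, B, C, X) (A, B, C, Y) := by
  rcases h with rfl | rfl | rfl | rfl
  · exact Relation.ReflTransGen.refl
  · exact Relation.ReflTransGen.single (ElemStep.negD A B C X)
  · exact Relation.ReflTransGen.single (ElemStep.revD A B C X)
  · exact Relation.ReflTransGen.head (ElemStep.revD A B C X)
      (Relation.ReflTransGen.single (ElemStep.negD A B C (revSeq (n-1) X)))

lemma asym_prop {n : ℕ} {Y : BSeq} {i0 : ℤ}
    (hi0 : 1 ≤ i0)
    (hasym : Y i0 ≠ Y ((n:ℤ)+1-i0))
    (hlow : ∀ j : ℤ, 1 ≤ j → j < i0 → Y j = Y ((n:ℤ)+1-j))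
    (hval : Y i0 = 1) :
    ∀ i : ℤ, 1 ≤ i → i ≤ (n:ℤ) → Y i ≠ Y ((n:ℤ)+1-i) →
      (∀ j : ℤ, 1 ≤ j → j < i → Y j = Y ((n:ℤ)+1-j)) → Y i = 1 := by
  intro i h1 _ hne hmin
  have hii : i = i0 := by
    by_contra hne2
    rcases lt_or_gt_of_ne hne2 with hlt | hgt
    · exact hne (hlow i h1 hlt)
    · exact hasym (hmin i0 hi0 hgt)
  rw [hii]; exact hval

lemma normalize_AB {n : ℕ} (hn : 1 ≤ n) {X : BSeq} (hX : IsBinarySeq n X)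
    (he : X 1 * X (n:ℤ) = 1) :
    ∃ Y : BSeq, (Y = X ∨ Y = negSeq X ∨ Y = revSeq n X ∨ Y = negSeq (revSeq n X)) ∧
      Y 1 = 1 ∧ Y (n:ℤ) = 1 ∧
      (∀ i : ℤ, 1 ≤ i → i ≤ (n:ℤ) → Y i ≠ Y ((n:ℤ)+1-i) →
        (∀ j : ℤ, 1 ≤ j → j < i → Y j = Y ((n:ℤ)+1-j)) → Y i = 1) := by
  classical
  have hn' : (1:ℤ) ≤ (n:ℤ) := by exact_mod_cast hn
  have h1 : X 1 = 1 ∨ X 1 = -1 := hX.1 1 le_rfl hn'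
  have hnn : X (n:ℤ) = 1 ∨ X (n:ℤ) = -1 := hX.1 _ hn' le_rfl
  have h1n : X 1 = X (n:ℤ) := by
    rcases h1 with h | h <;> rcases hnn with h' | h' <;> rw [h, h'] at he ⊢ <;> norm_num at he
  set S : Finset ℤ := (Finset.Icc (1:ℤ) (n:ℤ)).filter (fun i => X i ≠ X ((n:ℤ)+1-i)) with hS
  by_cases hSe : S.Nonempty
  · -- asymmetric case
    set i0 := S.min' hSe with hi0def
    have hi0S : i0 ∈ S := S.min'_mem hSe
    rw [hS, Finset.mem_filter, Finset.mem_Icc] at hi0S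
    obtain ⟨⟨hi0l, hi0r⟩, hi0a⟩ := hi0S
    have hmin : ∀ j : ℤ, 1 ≤ j → j < i0 → X j = X ((n:ℤ)+1-j) := by
      intro j hj1 hj2
      by_contra hne
      have hjS : j ∈ S := by
        rw [hS, Finset.mem_filter, Finset.mem_Icc]
        exact ⟨⟨hj1, by omega⟩, hne⟩
      have := S.min'_le j hjS
      omega
    have hi0gt : 1 < i0 := by
      rcases eq_or_lt_of_le hi0l with h | h
      · exfalso; apply hi0a; rw [← h]
        have : (n:ℤ) + 1 - 1 = (n:ℤ) := by ring
        rw [this]; exact h1n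
      · exact h
    have hrl : (1:ℤ) ≤ (n:ℤ)+1-i0 := by omega
    have hrr : (n:ℤ)+1-i0 ≤ (n:ℤ) := by omega
    have hv0 : X i0 = 1 ∨ X i0 = -1 := hX.1 _ hi0l hi0r
    have hv0' : X ((n:ℤ)+1-i0) = 1 ∨ X ((n:ℤ)+1-i0) = -1 := hX.1 _ hrl hrr
    have hrev : ∀ j : ℤ, revSeq n X ((n:ℤ)+1-j) = X j := by
      intro j; unfold revSeq; congr 1; ring
    rcases h1 with h1 | h1
    · have hXn : X (n:ℤ) = 1 := by rw [← h1n]; exact h1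
      rcases hv0 with hv | hv
      · exact ⟨X, Or.inl rfl, h1, hXn, asym_prop (by omega) hi0a hmin hv⟩
      · -- X i0 = -1 : reverse
        have hv' : X ((n:ℤ)+1-i0) = 1 := by
          rcases hv0' with h | h
          · exact h
          · exfalso; exact hi0a (by rw [hv, h])
        refine ⟨revSeq n X, Or.inr (Or.inr (Or.inl rfl)), ?_, ?_, ?_⟩
        · show X ((n:ℤ)+1-1) = 1
          have : (n:ℤ)+1-1 = (n:ℤ) := by ring
          rw [this]; exact hXn
        · show X ((n:ℤ)+1-(n:ℤ)) = 1
          have : (n:ℤ)+1-(n:ℤ) = 1 := by ring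
          rw [this]; exact h1
        · apply asym_prop (i0 := i0) (by omega)
          · rw [hrev]
            show X ((n:ℤ)+1-i0) ≠ X i0
            exact fun hcontra => hi0a hcontra.symm
          · intro j hj1 hj2
            rw [hrev]
            exact (hmin j hj1 hj2).symm
          · show X ((n:ℤ)+1-i0) = 1
            exact hv'
    · have hXn : X (n:ℤ) = -1 := by rw [← h1n]; exact h1
      rcases hv0 with hv | hv
      · -- X i0 = 1 : negate and reverse
        have hv' : X ((n:ℤ)+1-i0) = -1 := by
          rcases hv0' with h | h
          · exfalso; exact hi0a (by rw [hv, h])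
          · exact h
        refine ⟨negSeq (revSeq n X), Or.inr (Or.inr (Or.inr rfl)), ?_, ?_, ?_⟩
        · show -(X ((n:ℤ)+1-1)) = 1
          have : (n:ℤ)+1-1 = (n:ℤ) := by ring
          rw [this, hXn]; norm_num
        · show -(X ((n:ℤ)+1-(n:ℤ))) = 1
          have : (n:ℤ)+1-(n:ℤ) = 1 := by ring
          rw [this, h1]; norm_num
        · apply asym_prop (i0 := i0) (by omega)
          · show -(revSeq n X i0) ≠ -(revSeq n X ((n:ℤ)+1-i0))
            rw [hrev]
            show -(X ((n:ℤ)+1-i0)) ≠ -(X i0)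
            intro hcontra
            exact hi0a (by have := neg_injective hcontra; rw [this])
          · intro j hj1 hj2
            show -(revSeq n X j) = -(revSeq n X ((n:ℤ)+1-j))
            rw [hrev]
            show -(X ((n:ℤ)+1-j)) = -(X j)
            rw [hmin j hj1 hj2]
          · show -(X ((n:ℤ)+1-i0)) = 1
            rw [hv']; norm_num
      · -- X i0 = -1 : negate
        refine ⟨negSeq X, Or.inr (Or.inl rfl), ?_, ?_, ?_⟩
        · show -(X 1) = 1; rw [h1]; norm_num
        · show -(X (n:ℤ)) = 1; rw [hXn]; norm_num
        · apply asym_prop (i0 := i0) (by omega)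
          · show -(X i0) ≠ -(X ((n:ℤ)+1-i0))
            intro hcontra; exact hi0a (neg_injective hcontra)
          · intro j hj1 hj2
            show -(X j) = -(X ((n:ℤ)+1-j))
            rw [hmin j hj1 hj2]
          · show -(X i0) = 1; rw [hv]; norm_num
  · -- symmetric case
    have hsym : ∀ i : ℤ, 1 ≤ i → i ≤ (n:ℤ) → X i = X ((n:ℤ)+1-i) := by
      intro i hi1 hi2
      by_contra hne
      exact hSe ⟨i, by rw [hS, Finset.mem_filter, Finset.mem_Icc]; exact ⟨⟨hi1, hi2⟩, hne⟩⟩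
    rcases h1 with h1 | h1
    · have hXn : X (n:ℤ) = 1 := by rw [← h1n]; exact h1
      exact ⟨X, Or.inl rfl, h1, hXn, fun i hi1 hi2 hne _ => absurd (hsym i hi1 hi2) hne⟩
    · have hXn : X (n:ℤ) = -1 := by rw [← h1n]; exact h1
      refine ⟨negSeq X, Or.inr (Or.inl rfl), ?_, ?_, ?_⟩
      · show -(X 1) = 1; rw [h1]; norm_num
      · show -(X (n:ℤ)) = 1; rw [hXn]; norm_num
      · intro i hi1 hi2 hne _
        exfalso; apply hne
        show -(X i) = -(X ((n:ℤ)+1-i))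
        rw [hsym i hi1 hi2]

lemma sym_prop {n : ℕ} {Y : BSeq} {i0 : ℤ}
    (hi0 : 1 ≤ i0)
    (hsymm : Y i0 = Y ((n:ℤ)+1-i0))
    (hlow : ∀ j : ℤ, 1 ≤ j → j < i0 → Y j ≠ Y ((n:ℤ)+1-j))
    (hval : Y i0 = 1) :
    ∀ i : ℤ, 1 ≤ i → i ≤ (n:ℤ) → Y i = Y ((n:ℤ)+1-i) →
      (∀ j : ℤ, 1 ≤ j → j < i → Y j ≠ Y ((n:ℤ)+1-j)) → Y i = 1 := by
  intro i h1 _ heq hmin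
  have hii : i = i0 := by
    by_contra hne2
    rcases lt_or_gt_of_ne hne2 with hlt | hgt
    · exact (hlow i h1 hlt) heq
    · exact (hmin i0 hi0 hgt) hsymm
  rw [hii]; exact hval

lemma normalize_C {n : ℕ} (hn : 1 ≤ n) {X : BSeq} (hX : IsBinarySeq n X) :
    ∃ Y : BSeq, (Y = X ∨ Y = negSeq X ∨ Y = revSeq n X ∨ Y = negSeq (revSeq n X)) ∧
      Y 1 = 1 ∧
      (∀ i : ℤ, 1 ≤ i → i ≤ (n:ℤ) → Y i = Y ((n:ℤ)+1-i) →
        (∀ j : ℤ, 1 ≤ j → j < i → Y j ≠ Y ((n:ℤ)+1-j)) → Y i = 1) := by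
  classical
  have hn' : (1:ℤ) ≤ (n:ℤ) := by exact_mod_cast hn
  have h1 : X 1 = 1 ∨ X 1 = -1 := hX.1 1 le_rfl hn'
  have hnn : X (n:ℤ) = 1 ∨ X (n:ℤ) = -1 := hX.1 _ hn' le_rfl
  set S : Finset ℤ := (Finset.Icc (1:ℤ) (n:ℤ)).filter (fun i => X i = X ((n:ℤ)+1-i)) with hS
  by_cases hSe : S.Nonempty
  · set i0 := S.min' hSe with hi0def
    have hi0S : i0 ∈ S := S.min'_mem hSe
    rw [hS, Finset.mem_filter, Finset.mem_Icc] at hi0S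
    obtain ⟨⟨hi0l, hi0r⟩, hi0a⟩ := hi0S
    have hmin : ∀ j : ℤ, 1 ≤ j → j < i0 → X j ≠ X ((n:ℤ)+1-j) := by
      intro j hj1 hj2 heq
      have hjS : j ∈ S := by
        rw [hS, Finset.mem_filter, Finset.mem_Icc]
        exact ⟨⟨hj1, by omega⟩, heq⟩
      have := S.min'_le j hjS
      omega
    have hv0 : X i0 = 1 ∨ X i0 = -1 := hX.1 _ hi0l hi0r
    have hrev : ∀ j : ℤ, revSeq n X ((n:ℤ)+1-j) = X j := by
      intro j; unfold revSeq; congr 1; ring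
    have hone : (n:ℤ)+1-1 = (n:ℤ) := by ring
    have hlst : (n:ℤ)+1-(n:ℤ) = 1 := by ring
    rcases hv0 with hv | hv
    · rcases h1 with h1 | h1
      · exact ⟨X, Or.inl rfl, h1, sym_prop (i0 := i0) hi0l hi0a hmin hv⟩
      · -- X 1 = -1, X i0 = 1 : i0 > 1 so X 1 ≠ X n, X n = 1; reverse
        have hi0gt : 1 < i0 := by
          rcases eq_or_lt_of_le hi0l with h | h
          · exfalso; rw [← h] at hi0a hv; rw [hv] at h1; norm_num at h1
          · exact h
        have hXn : X (n:ℤ) = 1 := by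
          rcases hnn with h | h
          · exact h
          · exfalso
            apply hmin 1 le_rfl hi0gt
            rw [hone, h1, h]
        refine ⟨revSeq n X, Or.inr (Or.inr (Or.inl rfl)), ?_, ?_⟩
        · show X ((n:ℤ)+1-1) = 1; rw [hone]; exact hXn
        · apply sym_prop (i0 := i0) hi0l
          · rw [hrev]; show X ((n:ℤ)+1-i0) = X i0; exact hi0a.symm
          · intro j hj1 hj2 heq
            rw [hrev] at heq
            exact hmin j hj1 hj2 heq.symm
          · rw [show revSeq n X i0 = X ((n:ℤ)+1-i0) from rfl, ← hi0a]; exact hv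
    · rcases h1 with h1 | h1
      · -- X 1 = 1, X i0 = -1 : i0 > 1, X n = -1; negate and reverse
        have hi0gt : 1 < i0 := by
          rcases eq_or_lt_of_le hi0l with h | h
          · exfalso; rw [← h] at hi0a hv; rw [hv] at h1; norm_num at h1
          · exact h
        have hXn : X (n:ℤ) = -1 := by
          rcases hnn with h | h
          · exfalso
            apply hmin 1 le_rfl hi0gt
            rw [hone, h1, h]
          · exact h
        refine ⟨negSeq (revSeq n X), Or.inr (Or.inr (Or.inr rfl)), ?_, ?_⟩
        · show -(X ((n:ℤ)+1-1)) = 1; rw [hone, hXn]; norm_num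
        · apply sym_prop (i0 := i0) hi0l
          · show -(revSeq n X i0) = -(revSeq n X ((n:ℤ)+1-i0))
            rw [hrev]
            show -(X ((n:ℤ)+1-i0)) = -(X i0)
            rw [hi0a]
          · intro j hj1 hj2 heq
            have : revSeq n X j = revSeq n X ((n:ℤ)+1-j) := neg_injective heq
            rw [hrev] at this
            exact hmin j hj1 hj2 this.symm
          · show -(revSeq n X i0) = 1
            rw [show revSeq n X i0 = X ((n:ℤ)+1-i0) from rfl, ← hi0a, hv]; norm_num
      · -- X 1 = -1, X i0 = -1 : negate
        refine ⟨negSeq X, Or.inr (Or.inl rfl), ?_, ?_⟩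
        · show -(X 1) = 1; rw [h1]; norm_num
        · apply sym_prop (i0 := i0) hi0l
          · show -(X i0) = -(X ((n:ℤ)+1-i0)); rw [hi0a]
          · intro j hj1 hj2 heq
            exact hmin j hj1 hj2 (neg_injective heq)
          · show -(X i0) = 1; rw [hv]; norm_num
  · -- no symmetric position
    have hasym : ∀ i : ℤ, 1 ≤ i → i ≤ (n:ℤ) → X i ≠ X ((n:ℤ)+1-i) := by
      intro i hi1 hi2 heq
      exact hSe ⟨i, by rw [hS, Finset.mem_filter, Finset.mem_Icc]; exact ⟨⟨hi1, hi2⟩, heq⟩⟩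
    rcases h1 with h1 | h1
    · exact ⟨X, Or.inl rfl, h1, fun i hi1 hi2 heq _ => absurd heq (hasym i hi1 hi2)⟩
    · refine ⟨negSeq X, Or.inr (Or.inl rfl), ?_, ?_⟩
      · show -(X 1) = 1; rw [h1]; norm_num
      · intro i hi1 hi2 heq _
        exact absurd (neg_injective heq) (hasym i hi1 hi2)

lemma bad_prop {m : ℕ} {Y : BSeq} {i0 : ℤ}
    (hi0 : 1 ≤ i0)
    (hbad : Y i0 * Y ((m:ℤ)+1-i0) ≠ Y (m:ℤ))
    (hlow : ∀ j : ℤ, 1 ≤ j → j < i0 → Y j * Y ((m:ℤ)+1-j) = Y (m:ℤ))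
    (hval : Y i0 = 1) :
    ∀ i : ℤ, 1 ≤ i → i ≤ (m:ℤ) → Y i * Y ((m:ℤ)+1-i) ≠ Y (m:ℤ) →
      (∀ j : ℤ, 1 ≤ j → j < i → Y j * Y ((m:ℤ)+1-j) = Y (m:ℤ)) → Y i = 1 := by
  intro i h1 _ hne hmin
  have hii : i = i0 := by
    by_contra hne2
    rcases lt_or_gt_of_ne hne2 with hlt | hgt
    · exact hne (hlow i h1 hlt)
    · exact hbad (hmin i0 hi0 hgt)
  rw [hii]; exact hval

lemma normalize_D_core {m : ℕ} (hm : 1 ≤ m) {W : BSeq} (hW : IsBinarySeq m W)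
    (hW1 : W 1 = 1) :
    ∃ Y : BSeq, (Y = W ∨ Y = revSeq m W ∨ Y = negSeq (revSeq m W)) ∧ Y 1 = 1 ∧
      (∀ i : ℤ, 1 ≤ i → i ≤ (m:ℤ) → Y i * Y ((m:ℤ)+1-i) ≠ Y (m:ℤ) →
        (∀ j : ℤ, 1 ≤ j → j < i → Y j * Y ((m:ℤ)+1-j) = Y (m:ℤ)) → Y i = 1) := by
  classical
  have hm' : (1:ℤ) ≤ (m:ℤ) := by exact_mod_cast hm
  have hmm : W (m:ℤ) = 1 ∨ W (m:ℤ) = -1 := hW.1 _ hm' le_rfl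
  have hone : (m:ℤ)+1-1 = (m:ℤ) := by ring
  have hlst : (m:ℤ)+1-(m:ℤ) = 1 := by ring
  set S : Finset ℤ :=
    (Finset.Icc (1:ℤ) (m:ℤ)).filter (fun i => W i * W ((m:ℤ)+1-i) ≠ W (m:ℤ)) with hS
  by_cases hSe : S.Nonempty
  · set i0 := S.min' hSe with hi0def
    have hi0S : i0 ∈ S := S.min'_mem hSe
    rw [hS, Finset.mem_filter, Finset.mem_Icc] at hi0S
    obtain ⟨⟨hi0l, hi0r⟩, hi0a⟩ := hi0S
    have hmin : ∀ j : ℤ, 1 ≤ j → j < i0 → W j * W ((m:ℤ)+1-j) = W (m:ℤ) := by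
      intro j hj1 hj2
      by_contra hne
      have hjS : j ∈ S := by
        rw [hS, Finset.mem_filter, Finset.mem_Icc]
        exact ⟨⟨hj1, by omega⟩, hne⟩
      have := S.min'_le j hjS
      omega
    have hi0gt : 1 < i0 := by
      rcases eq_or_lt_of_le hi0l with h | h
      · exfalso; apply hi0a; rw [← h, hW1, one_mul, hone]
      · exact h
    have hrl : (1:ℤ) ≤ (m:ℤ)+1-i0 := by omega
    have hrr : (m:ℤ)+1-i0 ≤ (m:ℤ) := by omega
    have hv0 : W i0 = 1 ∨ W i0 = -1 := hW.1 _ hi0l hi0r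
    have hv0' : W ((m:ℤ)+1-i0) = 1 ∨ W ((m:ℤ)+1-i0) = -1 := hW.1 _ hrl hrr
    have hrev : ∀ j : ℤ, revSeq m W ((m:ℤ)+1-j) = W j := by
      intro j; unfold revSeq; congr 1; ring
    rcases hv0 with hv | hv
    · exact ⟨W, Or.inl rfl, hW1, bad_prop (i0 := i0) hi0l hi0a hmin hv⟩
    · -- W i0 = -1
      rcases hmm with he | he
      · -- last element 1 : reverse
        have hv' : W ((m:ℤ)+1-i0) = 1 := by
          rcases hv0' with h | h
          · exact h
          · exfalso; apply hi0a; rw [hv, h, he]; norm_num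
        refine ⟨revSeq m W, Or.inr (Or.inl rfl), ?_, ?_⟩
        · show W ((m:ℤ)+1-1) = 1; rw [hone]; exact he
        · apply bad_prop (i0 := i0) hi0l
          · show revSeq m W i0 * revSeq m W ((m:ℤ)+1-i0) ≠ revSeq m W (m:ℤ)
            rw [hrev]
            show W ((m:ℤ)+1-i0) * W i0 ≠ W ((m:ℤ)+1-(m:ℤ))
            rw [hlst, hW1]
            intro hc; apply hi0a; rw [mul_comm, hc, he]
          · intro j hj1 hj2
            show revSeq m W j * revSeq m W ((m:ℤ)+1-j) = revSeq m W (m:ℤ)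
            rw [hrev]
            show W ((m:ℤ)+1-j) * W j = W ((m:ℤ)+1-(m:ℤ))
            rw [hlst, hW1, mul_comm, hmin j hj1 hj2, he]
          · show W ((m:ℤ)+1-i0) = 1; exact hv'
      · -- last element -1 : negate and reverse
        have hv' : W ((m:ℤ)+1-i0) = -1 := by
          rcases hv0' with h | h
          · exfalso; apply hi0a; rw [hv, h, he]; norm_num
          · exact h
        refine ⟨negSeq (revSeq m W), Or.inr (Or.inr rfl), ?_, ?_⟩
        · show -(W ((m:ℤ)+1-1)) = 1; rw [hone, he]; norm_num
        · apply bad_prop (i0 := i0) hi0l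
          · show (-(revSeq m W i0)) * (-(revSeq m W ((m:ℤ)+1-i0))) ≠ -(revSeq m W (m:ℤ))
            rw [neg_mul_neg, hrev]
            show revSeq m W i0 * W i0 ≠ -(W ((m:ℤ)+1-(m:ℤ)))
            rw [hlst, hW1]
            show W ((m:ℤ)+1-i0) * W i0 ≠ -1
            intro hc; apply hi0a; rw [mul_comm, hc, he]
          · intro j hj1 hj2
            show (-(revSeq m W j)) * (-(revSeq m W ((m:ℤ)+1-j))) = -(revSeq m W (m:ℤ))
            rw [neg_mul_neg, hrev]
            show revSeq m W j * W j = -(W ((m:ℤ)+1-(m:ℤ)))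
            rw [hlst, hW1]
            show W ((m:ℤ)+1-j) * W j = -1
            rw [mul_comm, hmin j hj1 hj2, he]
          · show -(revSeq m W i0) = 1
            show -(W ((m:ℤ)+1-i0)) = 1
            rw [hv']; norm_num
  · -- no bad position
    have hgood : ∀ i : ℤ, 1 ≤ i → i ≤ (m:ℤ) → W i * W ((m:ℤ)+1-i) = W (m:ℤ) := by
      intro i hi1 hi2
      by_contra hne
      exact hSe ⟨i, by rw [hS, Finset.mem_filter, Finset.mem_Icc]; exact ⟨⟨hi1, hi2⟩, hne⟩⟩
    exact ⟨W, Or.inl rfl, hW1, fun i hi1 hi2 hne _ => absurd (hgood i hi1 hi2) hne⟩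

lemma rev_negSeq (m : ℕ) (X : BSeq) : revSeq m (negSeq X) = negSeq (revSeq m X) := rfl

lemma negSeq_negSeq (X : BSeq) : negSeq (negSeq X) = X := funext fun i => neg_neg _

lemma normalize_D {m : ℕ} (hm : 1 ≤ m) {X : BSeq} (hX : IsBinarySeq m X) :
    ∃ Y : BSeq, (Y = X ∨ Y = negSeq X ∨ Y = revSeq m X ∨ Y = negSeq (revSeq m X)) ∧
      Y 1 = 1 ∧
      (∀ i : ℤ, 1 ≤ i → i ≤ (m:ℤ) → Y i * Y ((m:ℤ)+1-i) ≠ Y (m:ℤ) →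
        (∀ j : ℤ, 1 ≤ j → j < i → Y j * Y ((m:ℤ)+1-j) = Y (m:ℤ)) → Y i = 1) := by
  have hm' : (1:ℤ) ≤ (m:ℤ) := by exact_mod_cast hm
  rcases hX.1 1 le_rfl hm' with h1 | h1
  · obtain ⟨Y, hmem, hp⟩ := normalize_D_core hm hX h1
    refine ⟨Y, ?_, hp⟩
    rcases hmem with h|h|h
    · exact Or.inl h
    · exact Or.inr (Or.inr (Or.inl h))
    · exact Or.inr (Or.inr (Or.inr h))
  · have h1' : negSeq X 1 = 1 := by show -(X 1) = 1; rw [h1]; norm_num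
    obtain ⟨Y, hmem, hp⟩ := normalize_D_core hm (binNeg hX) h1'
    refine ⟨Y, ?_, hp⟩
    rcases hmem with h|h|h
    · exact Or.inr (Or.inl h)
    · rw [rev_negSeq] at h
      exact Or.inr (Or.inr (Or.inr h))
    · rw [rev_negSeq, negSeq_negSeq] at h
      exact Or.inr (Or.inr (Or.inl h))

lemma sum_pm_parity {f : ℤ → ℤ} (s : Finset ℤ) (hf : ∀ j ∈ s, f j = 1 ∨ f j = -1) :
    (2:ℤ) ∣ (∑ j ∈ s, f j) - s.card := by
  induction s using Finset.induction_on with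
  | empty => simp
  | @insert a t hat ih =>
    rw [Finset.sum_insert hat, Finset.card_insert_of_notMem hat]
    have h1 := hf a (Finset.mem_insert_self a t)
    have h2 := ih (fun j hj => hf j (Finset.mem_insert_of_mem hj))
    push_cast
    rcases h1 with h | h <;> rw [h] <;> omega

lemma sum_mod4 {n : ℕ} (hn : 1 ≤ n) {X : BSeq}
    (hX : ∀ k : ℤ, 1 ≤ k → k ≤ (n:ℤ) → X k = 1 ∨ X k = -1) :
    (4:ℤ) ∣ (∑ j ∈ Finset.Icc (1:ℤ) ((n:ℤ) - 1), X j * X (j + 1)) + X 1 * X (n:ℤ) - n := by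
  induction n, hn using Nat.le_induction with
  | base =>
    simp only [Nat.cast_one, sub_self]
    rw [Finset.Icc_eq_empty (by norm_num), Finset.sum_empty]
    rcases hX 1 le_rfl le_rfl with h | h <;> rw [h] <;> norm_num
  | succ n hn ih =>
    have hX' : ∀ k : ℤ, 1 ≤ k → k ≤ (n:ℤ) → X k = 1 ∨ X k = -1 := by
      intro k h1 h2; exact hX k h1 (by push_cast; omega)
    have hsplit : Finset.Icc (1:ℤ) ((n:ℤ)+1-1) = insert (n:ℤ) (Finset.Icc (1:ℤ) ((n:ℤ)-1)) := by
      ext x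
      simp only [Finset.mem_Icc, Finset.mem_insert]
      omega
    have hc : ((n+1:ℕ):ℤ) = (n:ℤ) + 1 := by push_cast; ring
    rw [hc, hsplit, Finset.sum_insert (by simp)]
    have ihh := ih hX'
    have hn' : (1:ℤ) ≤ (n:ℤ) := by exact_mod_cast hn
    have v1 := hX 1 le_rfl (by push_cast; omega)
    have vn := hX (n:ℤ) hn' (by push_cast; omega)
    have vn1 := hX ((n:ℤ)+1) (by omega) (by push_cast; omega)
    rcases v1 with h1 | h1 <;> rcases vn with h2 | h2 <;> rcases vn1 with h3 | h3 <;>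
      rw [h1, h2, h3] <;> rw [h1, h2] at ihh <;> omega

lemma NAC_mod4 {n : ℕ} {X : BSeq} (hX : IsBinarySeq n X) (hn : 2 ≤ n) :
    (4:ℤ) ∣ NAC X 1 + NAC X ((n:ℤ) - 1) - n := by
  have h1 : NAC X 1 = ∑ j ∈ Finset.Icc (1:ℤ) ((n:ℤ) - 1), X j * X (j + 1) := by
    rw [NAC_eq_sum hX]
    apply Finset.sum_congr rfl
    intro j _
    congr 1
    ring
  rw [h1, NAC_last hX hn]
  exact sum_mod4 (by omega) hX.1

lemma altSeq_odd_pos (X : BSeq) : altSeq X 1 = X 1 := by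
  have : ¬ Even (1:ℤ) := by decide
  simp [altSeq, this]

lemma altSeq_even' {X : BSeq} {i : ℤ} (hi : Even i) : altSeq X i = -X i := by
  simp [altSeq, hi]

lemma ends_eq {n : ℕ} {A B C D : BSeq} (hn : 2 ≤ n) (h : IsTT n A B C D) :
    A 1 * A (n:ℤ) = B 1 * B (n:ℤ) := by
  obtain ⟨hA, hB, hC, hD, heq⟩ := h
  have hn' : (2:ℤ) ≤ (n:ℤ) := by exact_mod_cast hn
  have hD0 : NAC D ((n:ℤ) - 1) = 0 := NAC_zero_of_ge hD (by omega)
  have hE := heq ((n:ℤ) - 1) (by omega)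
  rw [NAC_last hA hn, NAC_last hB hn, NAC_last hC hn, hD0] at hE
  have hx := pm_mul (hA.1 1 le_rfl (by omega)) (hA.1 (n:ℤ) (by omega) le_rfl)
  have hy := pm_mul (hB.1 1 le_rfl (by omega)) (hB.1 (n:ℤ) (by omega) le_rfl)
  have hz := pm_mul (hC.1 1 le_rfl (by omega)) (hC.1 (n:ℤ) (by omega) le_rfl)
  rcases hx with hx | hx <;> rcases hy with hy | hy <;> rcases hz with hz | hz <;>
    simp only [hx, hy, hz] at hE ⊢ <;> omega

lemma key6 {n : ℕ} {A B C D : BSeq} (hn : 3 ≤ n) (h : IsTT n A B C D)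
    (hA1 : A 1 = 1) (hAn : A (n:ℤ) = 1) (hB1 : B 1 = 1) (hBn : B (n:ℤ) = 1)
    (hab : A 2 = B 2) : A ((n:ℤ) - 1) = -B ((n:ℤ) - 1) := by
  obtain ⟨hA, hB, hC, hD, heq⟩ := h
  have hn' : (3:ℤ) ≤ (n:ℤ) := by exact_mod_cast hn
  have hE := heq ((n:ℤ) - 2) (by omega)
  rw [NAC_sublast hA hn, NAC_sublast hB hn, NAC_sublast hC hn] at hE
  have hcast : ((n-1:ℕ):ℤ) = (n:ℤ) - 1 := by omega
  have hDlast : NAC D ((n:ℤ) - 2) = D 1 * D ((n:ℤ) - 1) := by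
    have h2 := NAC_last hD (by omega : 2 ≤ n - 1)
    rw [hcast] at h2
    have h3 : (n:ℤ) - 1 - 1 = (n:ℤ) - 2 := by ring
    rw [h3] at h2
    exact h2
  rw [hDlast, hA1, hAn, hB1, hBn, one_mul, mul_one, one_mul, mul_one, ← hab] at hE
  have hu := hA.1 ((n:ℤ) - 1) (by omega) (by omega)
  have hw := hB.1 ((n:ℤ) - 1) (by omega) (by omega)
  have hx := hA.1 2 (by omega) (by omega)
  have hp := pm_mul (hC.1 1 (by omega) (by omega)) (hC.1 ((n:ℤ)-1) (by omega) (by omega))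
  have hq := pm_mul (hC.1 2 (by omega) (by omega)) (hC.1 (n:ℤ) (by omega) (by omega))
  have hr := pm_mul (hD.1 1 (by omega) (by omega)) (hD.1 ((n:ℤ)-1) (by omega) (by omega))
  rcases hu with hu | hu <;> rcases hw with hw | hw <;> rcases hx with hx | hx <;>
    rcases hp with hp | hp <;> rcases hq with hq | hq <;> rcases hr with hr | hr <;>
    rw [hu, hw] <;> rw [hu, hw, hx, hp, hq, hr] at hE <;> omega

lemma no_tt_odd {n : ℕ} {A B C D : BSeq} (hn : 3 ≤ n) (hodd : Odd n)
    (h : IsTT n A B C D) : False := by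
  obtain ⟨hA, hB, hC, hD, heq⟩ := h
  have hn' : (3:ℤ) ≤ (n:ℤ) := by exact_mod_cast hn
  have h4A := NAC_mod4 hA (by omega)
  have h4B := NAC_mod4 hB (by omega)
  have h4C := NAC_mod4 hC (by omega)
  have hD0 : NAC D ((n:ℤ) - 1) = 0 := NAC_zero_of_ge hD (by omega)
  have hcast : ((n-1:ℕ):ℤ) = (n:ℤ) - 1 := by omega
  have hD1 : NAC D 1 = ∑ j ∈ Finset.Icc (1:ℤ) ((n:ℤ) - 2), D j * D (1 + j) := by
    have hx : ((n-1:ℕ):ℤ) - 1 = (n:ℤ) - 2 := by omega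
    rw [NAC_eq_sum hD, hx]
  have hDpar : (2:ℤ) ∣ NAC D 1 - ((n:ℤ) - 2) := by
    rw [hD1]
    have hcard : (((Finset.Icc (1:ℤ) ((n:ℤ) - 2)).card : ℤ)) = (n:ℤ) - 2 := by
      rw [Int.card_Icc]
      rw [Int.toNat_of_nonneg (by omega)]
      ring
    have := sum_pm_parity (Finset.Icc (1:ℤ) ((n:ℤ) - 2)) (fun j hj => by
      have hj' := Finset.mem_Icc.mp hj
      exact pm_mul (hD.1 j hj'.1 (by omega)) (hD.1 (1+j) (by omega) (by omega)))
    rw [hcard] at this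
    exact this
  have hE1 := heq 1 one_ne_zero
  have hE2 := heq ((n:ℤ) - 1) (by omega)
  rw [hD0] at hE2
  have hoddm : n % 2 = 1 := Nat.odd_iff.mp hodd
  set a1 := NAC A 1 with ha1
  set b1 := NAC B 1 with hb1
  set c1 := NAC C 1 with hc1
  set d1 := NAC D 1 with hd1
  set a2 := NAC A ((n:ℤ) - 1) with ha2
  set b2 := NAC B ((n:ℤ) - 1) with hb2
  set c2 := NAC C ((n:ℤ) - 1) with hc2
  omega

/-- Every equivalence class of Turyn-type sequences `TT(n)` contains at least one
member in canonical form. -/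
theorem every_class_has_canonical_member (n : ℕ) (hn : 1 ≤ n) (A B C D : BSeq)
    (h : IsTT n A B C D) :
    ∃ A' B' C' D' : BSeq, TTEquiv n (A, B, C, D) (A', B', C', D') ∧
      IsCanonical n A' B' C' D' := by
  rcases Nat.even_or_odd n with hpar | hpar
  · -- n is even, hence n ≥ 2
    have hn2 : 2 ≤ n := by rcases hpar with ⟨k, hk⟩; omega
    have hn2' : (2:ℤ) ≤ (n:ℤ) := by exact_mod_cast hn2
    -- Stage 1: use alternation if necessary so that A 1 * A n = B 1 * B n = 1
    obtain ⟨A1, B1, C1, D1, he1, hTT1, hA1e, hB1e⟩ :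
        ∃ A1 B1 C1 D1 : BSeq, TTEquiv n (A, B, C, D) (A1, B1, C1, D1) ∧
          IsTT n A1 B1 C1 D1 ∧ A1 1 * A1 (n:ℤ) = 1 ∧ B1 1 * B1 (n:ℤ) = 1 := by
      have hAB := ends_eq hn2 h
      have hvA := pm_mul (h.1.1 1 le_rfl (by omega)) (h.1.1 (n:ℤ) (by omega) le_rfl)
      rcases hvA with hv | hv
      · exact ⟨A, B, C, D, Relation.ReflTransGen.refl, h, hv, by rw [← hAB]; exact hv⟩
      · have heven : Even ((n:ℤ)) := (Int.even_coe_nat n).mpr hpar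
        refine ⟨altSeq A, altSeq B, altSeq C, altSeq D,
          Relation.ReflTransGen.single (ElemStep.alt A B C D),
          isTT_step (ElemStep.alt A B C D) h, ?_, ?_⟩
        · rw [altSeq_odd_pos, altSeq_even' heven, mul_neg, hv]; norm_num
        · rw [altSeq_odd_pos, altSeq_even' heven, mul_neg, ← hAB, hv]; norm_num
    -- Stage 2: normalize A
    obtain ⟨A2, hmA, hA21, hA2n, hA2ii⟩ := normalize_AB hn hTT1.1 hA1e
    have he2 : TTEquiv n (A1, B1, C1, D1) (A2, B1, C1, D1) := equivA hmA
    have hTT2 : IsTT n A2 B1 C1 D1 := isTT_equiv he2 hTT1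
    -- Stage 3: normalize B
    obtain ⟨B2, hmB, hB21, hB2n, hB2ii⟩ := normalize_AB hn hTT2.2.1 hB1e
    have he3 : TTEquiv n (A2, B1, C1, D1) (A2, B2, C1, D1) := equivB hmB
    have hTT3 : IsTT n A2 B2 C1 D1 := isTT_equiv he3 hTT2
    -- Stage 4: normalize C
    obtain ⟨C2, hmC, hC21, hC2iv⟩ := normalize_C hn hTT3.2.2.1
    have he4 : TTEquiv n (A2, B2, C1, D1) (A2, B2, C2, D1) := equivC hmC
    have hTT4 : IsTT n A2 B2 C2 D1 := isTT_equiv he4 hTT3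
    -- Stage 5: normalize D
    obtain ⟨D2, hmD, hD21, hD2v⟩ := normalize_D (m := n - 1) (by omega) hTT4.2.2.2.1
    have he5 : TTEquiv n (A2, B2, C2, D1) (A2, B2, C2, D2) := equivD hmD
    have hTT5 : IsTT n A2 B2 C2 D2 := isTT_equiv he5 hTT4
    have hequiv : TTEquiv n (A, B, C, D) (A2, B2, C2, D2) :=
      Relation.ReflTransGen.trans he1 (Relation.ReflTransGen.trans he2
        (Relation.ReflTransGen.trans he3 (Relation.ReflTransGen.trans he4 he5)))
    have hcast : ((n-1:ℕ):ℤ) = (n:ℤ) - 1 := by omega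
    have hDv : ∀ i : ℤ, 1 ≤ i → i ≤ (n:ℤ) - 1 → D2 i * D2 ((n:ℤ) - i) ≠ D2 ((n:ℤ) - 1) →
        (∀ j : ℤ, 1 ≤ j → j < i → D2 j * D2 ((n:ℤ) - j) = D2 ((n:ℤ) - 1)) → D2 i = 1 := by
      intro i h1 h2 h3 h4
      apply hD2v i h1 (by omega)
      · rw [hcast, show (n:ℤ) - 1 + 1 - i = (n:ℤ) - i by ring]
        exact h3
      · intro j hj1 hj2
        rw [hcast, show (n:ℤ) - 1 + 1 - j = (n:ℤ) - j by ring]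
        exact h4 j hj1 hj2
    by_cases hgt : 2 < n
    · have hn3 : 3 ≤ n := hgt
      have hn3' : (3:ℤ) ≤ (n:ℤ) := by exact_mod_cast hn3
      have hA22 := hTT5.1.1 2 (by omega) (by omega)
      have hB22 := hTT5.2.1.1 2 (by omega) (by omega)
      by_cases hab : A2 2 = B2 2
      · have hkey := key6 hn3 hTT5 hA21 hA2n hB21 hB2n hab
        rcases hTT5.1.1 ((n:ℤ) - 1) (by omega) (by omega) with hv | hv
        · refine ⟨A2, B2, C2, D2, hequiv,
            ⟨⟨hA21, hA2n, hB21, hB2n, hC21, fun _ => hD21⟩, hA2ii, hB2ii, hC2iv, hDv, ?_, ?_⟩⟩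
          · intro _ hne; exact absurd hab hne
          · intro _ _
            refine ⟨hv, ?_⟩
            rw [hv] at hkey
            linarith
        · have hBval : B2 ((n:ℤ) - 1) = 1 := by
            rcases hTT5.2.1.1 ((n:ℤ) - 1) (by omega) (by omega) with h' | h'
            · exact h'
            · exfalso; rw [hv, h'] at hkey; norm_num at hkey
          refine ⟨B2, A2, C2, D2, Relation.ReflTransGen.trans hequiv
            (Relation.ReflTransGen.single (ElemStep.swap A2 B2 C2 D2)),
            ⟨⟨hB21, hB2n, hA21, hA2n, hC21, fun _ => hD21⟩, hB2ii, hA2ii, hC2iv, hDv, ?_, ?_⟩⟩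
          · intro _ hne; exact absurd hab.symm hne
          · intro _ _; exact ⟨hBval, hv⟩
      · rcases hA22 with hv | hv
        · refine ⟨A2, B2, C2, D2, hequiv,
            ⟨⟨hA21, hA2n, hB21, hB2n, hC21, fun _ => hD21⟩, hA2ii, hB2ii, hC2iv, hDv, ?_, ?_⟩⟩
          · intro _ _; exact hv
          · intro _ hc; exact absurd hc hab
        · have hBv : B2 2 = 1 := by
            rcases hB22 with h' | h'
            · exact h'
            · exfalso; exact hab (by rw [hv, h'])
          refine ⟨B2, A2, C2, D2, Relation.ReflTransGen.trans hequiv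
            (Relation.ReflTransGen.single (ElemStep.swap A2 B2 C2 D2)),
            ⟨⟨hB21, hB2n, hA21, hA2n, hC21, fun _ => hD21⟩, hB2ii, hA2ii, hC2iv, hDv, ?_, ?_⟩⟩
          · intro _ _; exact hBv
          · intro _ hc; exact absurd hc.symm hab
    · refine ⟨A2, B2, C2, D2, hequiv,
        ⟨⟨hA21, hA2n, hB21, hB2n, hC21, fun _ => hD21⟩, hA2ii, hB2ii, hC2iv, hDv, ?_, ?_⟩⟩
      · intro hc; exact absurd hc hgt
      · intro hc; exact absurd hc hgt
  · -- n is odd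
    rcases Nat.lt_or_ge n 3 with hlt | hge
    · -- n = 1
      have hn1 : n = 1 := by rcases hpar with ⟨k, hk⟩; omega
      subst hn1
      obtain ⟨hA, hB, hC, hD, _⟩ := h
      obtain ⟨A', hmA, hA'1⟩ : ∃ A' : BSeq, (A' = A ∨ A' = negSeq A ∨ A' = revSeq 1 A ∨
          A' = negSeq (revSeq 1 A)) ∧ A' 1 = 1 := by
        rcases hA.1 1 le_rfl (by norm_num) with h' | h'
        · exact ⟨A, Or.inl rfl, h'⟩
        · exact ⟨negSeq A, Or.inr (Or.inl rfl), by show -(A 1) = 1; rw [h']; norm_num⟩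
      obtain ⟨B', hmB, hB'1⟩ : ∃ B' : BSeq, (B' = B ∨ B' = negSeq B ∨ B' = revSeq 1 B ∨
          B' = negSeq (revSeq 1 B)) ∧ B' 1 = 1 := by
        rcases hB.1 1 le_rfl (by norm_num) with h' | h'
        · exact ⟨B, Or.inl rfl, h'⟩
        · exact ⟨negSeq B, Or.inr (Or.inl rfl), by show -(B 1) = 1; rw [h']; norm_num⟩
      obtain ⟨C', hmC, hC'1⟩ : ∃ C' : BSeq, (C' = C ∨ C' = negSeq C ∨ C' = revSeq 1 C ∨
          C' = negSeq (revSeq 1 C)) ∧ C' 1 = 1 := by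
        rcases hC.1 1 le_rfl (by norm_num) with h' | h'
        · exact ⟨C, Or.inl rfl, h'⟩
        · exact ⟨negSeq C, Or.inr (Or.inl rfl), by show -(C 1) = 1; rw [h']; norm_num⟩
      refine ⟨A', B', C', D, Relation.ReflTransGen.trans (equivA hmA)
        (Relation.ReflTransGen.trans (equivB hmB) (equivC hmC)), ?_⟩
      have hone : ((1:ℕ):ℤ) = 1 := by norm_num
      refine ⟨⟨hA'1, by rw [hone]; exact hA'1, hB'1, by rw [hone]; exact hB'1, hC'1,
        fun hc => absurd hc (by norm_num)⟩, ?_, ?_, ?_, ?_, ?_, ?_⟩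
      · intro i h1 h2 hne _
        rw [hone] at h2
        have hi : i = 1 := by omega
        subst hi
        exact absurd (by rw [hone]; norm_num : ((1:ℕ):ℤ) + 1 - 1 = 1) (fun hc => hne (by rw [hc]))
      · intro i h1 h2 hne _
        rw [hone] at h2
        have hi : i = 1 := by omega
        subst hi
        exact absurd (by rw [hone]; norm_num : ((1:ℕ):ℤ) + 1 - 1 = 1) (fun hc => hne (by rw [hc]))
      · intro i h1 h2 _ _
        rw [hone] at h2
        have hi : i = 1 := by omega
        subst hi
        exact hC'1
      · intro i h1 h2 _ _
        rw [hone] at h2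
        omega
      · intro hc; exact absurd hc (by norm_num)
      · intro hc; exact absurd hc (by norm_num)
    · exact (no_tt_odd hge hpar h).elim
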